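/- With $s(t)$ and $x_1(t)$ as above (susceptibility blowing up at $t_c$), the quantity $\mu_\epsilon = \frac{1}{2}\int_0^{t_c - \epsilon} (1 - x_1(t)^2)\, s(t)\, dt$ satisfies $\mu_\epsilon \sim \frac{1}{2}\log\frac{1}{\epsilon}$ as $\epsilon \to 0^+$, i.e. $\mu_\epsilon / \log(1/\epsilon) \to 1/2$. -/

import Mathlib

open Filter


private lemma s_ge_one_aux (x1 s : ℝ → ℝ) (tc : ℝ)
    (hs : ∀ t ∈ Set.Ico (0 : ℝ) tc,
      HasDerivAt s ((x1 t) ^ 2 + (1 - (x1 t) ^ 2) * (s t) ^ 2) t)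
    (hs0 : s 0 = 1) : ∀ t ∈ Set.Ico (0 : ℝ) tc, 1 ≤ s t := by
  intro t0 ht0
  by_contra hlt
  push_neg at hlt
  have ht00 : 0 ≤ t0 := ht0.1
  have ht0tc : t0 < tc := ht0.2
  have hscont : ContinuousOn s (Set.Icc 0 t0) := by
    intro t ht
    exact ((hs t ⟨ht.1, lt_of_le_of_lt ht.2 ht0tc⟩).continuousAt).continuousWithinAt
  set A : Set ℝ := Set.Icc (0:ℝ) t0 ∩ s ⁻¹' Set.Ici 1 with hA
  have h0A : (0:ℝ) ∈ A := ⟨⟨le_refl _, ht00⟩, by simp [hs0]⟩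
  have hAne : A.Nonempty := ⟨0, h0A⟩
  have hAbdd : BddAbove A := ⟨t0, fun x hx => hx.1.2⟩
  set τ := sSup A with hτ
  have hτmem : τ ∈ Set.Icc (0:ℝ) t0 :=
    ⟨le_csSup hAbdd h0A, csSup_le hAne (fun x hx => hx.1.2)⟩
  have hτA : τ ∈ A := by
    have hclosed : IsClosed A :=
      hscont.preimage_isClosed_of_isClosed isClosed_Icc isClosed_Ici
    exact hclosed.csSup_mem hAne hAbdd
  have hτlt : τ < t0 := by
    rcases eq_or_lt_of_le hτmem.2 with h' | h'
    · exfalso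
      have := hτA.2
      rw [Set.mem_preimage, h'] at this
      exact absurd hlt (not_lt.2 this)
    · exact h'
  have hτIco : τ ∈ Set.Ico (0:ℝ) tc := ⟨hτmem.1, lt_of_le_of_lt hτmem.2 ht0tc⟩
  have hcontτ : ContinuousAt s τ := (hs τ hτIco).continuousAt
  -- get a point x > τ, x ≤ t0, with s x ≥ 1
  have hsτge : (1:ℝ) ≤ s τ := hτA.2
  have hcase : (1:ℝ) < s τ ∨ s τ = 1 := by
    rcases eq_or_lt_of_le hsτge with h | h
    · exact Or.inr h.symm
    · exact Or.inl h
  have hkey : ∃ x, τ < x ∧ x ≤ t0 ∧ 1 ≤ s x := by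
    rcases hcase with h | h
    · have h1 : ∀ᶠ x in nhdsWithin τ (Set.Ioi τ), 1 < s x :=
        (hcontτ.eventually_const_lt h).filter_mono nhdsWithin_le_nhds
      have h2 : ∀ᶠ x in nhdsWithin τ (Set.Ioi τ), x < t0 :=
        eventually_nhdsWithin_of_eventually_nhds (Filter.Tendsto.eventually_lt_const hτlt tendsto_id)
      rcases (h1.and h2).exists with ⟨x, hx1, hx2⟩
      rcases Filter.Eventually.exists ((h1.and h2).and (eventually_mem_nhdsWithin)) with
        ⟨y, ⟨hy1, hy2⟩, hy3⟩
      exact ⟨y, hy3, hy2.le, hy1.le⟩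
    · -- s τ = 1, derivative at τ is 1 > 0
      have hd : HasDerivAt s ((x1 τ) ^ 2 + (1 - (x1 τ) ^ 2) * (s τ) ^ 2) τ := hs τ hτIco
      have hd1 : HasDerivAt s 1 τ := by
        have : (x1 τ) ^ 2 + (1 - (x1 τ) ^ 2) * (s τ) ^ 2 = 1 := by rw [h]; ring
        rwa [this] at hd
      have hslope : Tendsto (fun x => (s x - s τ) / (x - τ)) (nhdsWithin τ (Set.Ioi τ))
          (nhds 1) := by
        have := hd1.hasDerivWithinAt (s := Set.Ioi τ)
        rw [hasDerivWithinAt_iff_tendsto_slope] at this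
        have hsub : nhdsWithin τ (Set.Ioi τ \ {τ}) = nhdsWithin τ (Set.Ioi τ) := by
          congr 1
          ext x
          simp only [Set.mem_diff, Set.mem_singleton_iff, Set.mem_Ioi, and_iff_left_iff_imp]
          intro hx; exact ne_of_gt hx
        rw [hsub] at this
        simpa [slope_fun_def_field, div_eq_inv_mul] using this
      have hpos : ∀ᶠ x in nhdsWithin τ (Set.Ioi τ), 0 < (s x - s τ) / (x - τ) :=
        Filter.Tendsto.eventually_const_lt one_pos hslope
      have h2 : ∀ᶠ x in nhdsWithin τ (Set.Ioi τ), x < t0 :=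
        eventually_nhdsWithin_of_eventually_nhds (Filter.Tendsto.eventually_lt_const hτlt tendsto_id)
      rcases Filter.Eventually.exists ((hpos.and h2).and (eventually_mem_nhdsWithin)) with
        ⟨y, ⟨hy1, hy2⟩, hy3⟩
      refine ⟨y, hy3, hy2.le, ?_⟩
      have hyτ : (0:ℝ) < y - τ := sub_pos.2 hy3
      have : 0 < s y - s τ := by
        by_contra hcon
        push_neg at hcon
        have : (s y - s τ) / (y - τ) ≤ 0 := div_nonpos_of_nonpos_of_nonneg hcon hyτ.le
        linarith
      rw [h] at this; linarith
  rcases hkey with ⟨x, hx1, hx2, hx3⟩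
  have : x ∈ A := ⟨⟨le_trans hτmem.1 hx1.le, hx2⟩, hx3⟩
  exact absurd (le_csSup hAbdd this) (not_le.2 hx1)

/-- The limiting expected number of unicyclic components:
`μ_ε = ½∫₀^{t_c−ε} (1−x₁²)s ∼ ½ log(1/ε)` as `ε → 0⁺`. -/
theorem stmt5 (x1 s : ℝ → ℝ) (tc : ℝ) (htc : 0 < tc)
    (hx1 : ∀ t : ℝ, HasDerivAt x1 (-x1 t - (x1 t) ^ 2 + (x1 t) ^ 3) t)
    (hx10 : x1 0 = 1)
    (hx1pos : 0 < x1 tc) (hx1lt : x1 tc < 1)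
    (hs : ∀ t ∈ Set.Ico (0 : ℝ) tc,
      HasDerivAt s ((x1 t) ^ 2 + (1 - (x1 t) ^ 2) * (s t) ^ 2) t)
    (hs0 : s 0 = 1)
    (hblow : Tendsto s (nhdsWithin tc (Set.Iio tc)) atTop) :
    Tendsto
      (fun ε : ℝ =>
        ((1 / 2) * ∫ t in (0 : ℝ)..(tc - ε), (1 - (x1 t) ^ 2) * s t) / Real.log (1 / ε))
      (nhdsWithin 0 (Set.Ioi 0)) (nhds (1 / 2)) := by
  have hsge1 : ∀ t ∈ Set.Ico (0 : ℝ) tc, 1 ≤ s t := s_ge_one_aux x1 s tc hs hs0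
  have hx1c : Continuous x1 := continuous_iff_continuousAt.2 fun t => (hx1 t).continuousAt
  have hspos : ∀ t ∈ Set.Ico (0:ℝ) tc, 0 < s t := fun t ht =>
    lt_of_lt_of_le one_pos (hsge1 t ht)
  -- bound on x1^2
  obtain ⟨M, hM⟩ : ∃ M : ℝ, ∀ t ∈ Set.Icc (0:ℝ) tc, x1 t ^ 2 ≤ M := by
    obtain ⟨x, -, hx⟩ := isCompact_Icc.exists_isMaxOn (Set.nonempty_Icc.2 htc.le)
      ((hx1c.pow 2).continuousOn)
    exact ⟨x1 x ^ 2, fun t ht => hx ht⟩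
  have hM0 : 0 ≤ M := le_trans (sq_nonneg (x1 0)) (hM 0 ⟨le_refl _, htc.le⟩)
  -- c
  set c : ℝ := 1 - x1 tc ^ 2 with hc_def
  have hc : 0 < c := by nlinarith
  -- integral identity
  have hI : ∀ T ∈ Set.Ico (0:ℝ) tc,
      (∫ t in (0:ℝ)..T, (1 - x1 t ^ 2) * s t)
        = Real.log (s T) - ∫ t in (0:ℝ)..T, x1 t ^ 2 / s t := by
    intro T hT
    have hIcc : Set.Icc (0:ℝ) T ⊆ Set.Ico 0 tc := fun t ht =>
      ⟨ht.1, lt_of_le_of_lt ht.2 hT.2⟩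
    have huIcc : Set.uIcc (0:ℝ) T = Set.Icc 0 T := Set.uIcc_of_le hT.1
    have hscont : ContinuousOn s (Set.Icc 0 T) := fun t ht =>
      ((hs t (hIcc ht)).continuousAt).continuousWithinAt
    have hsne : ∀ t ∈ Set.Icc (0:ℝ) T, s t ≠ 0 := fun t ht =>
      (hspos t (hIcc ht)).ne'
    have hcont1 : ContinuousOn (fun t => x1 t ^ 2 / s t) (Set.Icc 0 T) :=
      ((hx1c.pow 2).continuousOn).div hscont hsne
    have hcont2 : ContinuousOn (fun t => (1 - x1 t ^ 2) * s t) (Set.Icc 0 T) :=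
      ((continuous_const.sub (hx1c.pow 2)).continuousOn).mul hscont
    have hint1 : IntervalIntegrable (fun t => x1 t ^ 2 / s t) MeasureTheory.volume 0 T :=
      (hcont1.mono (by rw [huIcc])).intervalIntegrable
    have hint2 : IntervalIntegrable (fun t => (1 - x1 t ^ 2) * s t) MeasureTheory.volume 0 T :=
      (hcont2.mono (by rw [huIcc])).intervalIntegrable
    have hderiv : ∀ t ∈ Set.uIcc (0:ℝ) T,
        HasDerivAt (fun t => Real.log (s t)) (x1 t ^ 2 / s t + (1 - x1 t ^ 2) * s t) t := by
      intro t ht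
      rw [huIcc] at ht
      have h0 := hsne t ht
      have hd := (hs t (hIcc ht)).log h0
      have : (x1 t ^ 2 + (1 - x1 t ^ 2) * s t ^ 2) / s t
          = x1 t ^ 2 / s t + (1 - x1 t ^ 2) * s t := by
        field_simp
      rwa [this] at hd
    have heq := intervalIntegral.integral_eq_sub_of_hasDerivAt hderiv (hint1.add hint2)
    rw [hs0, Real.log_one, sub_zero] at heq
    rw [intervalIntegral.integral_add hint1 hint2] at heq
    linarith
  -- bound on the correction integral
  have hJ : ∀ T ∈ Set.Ico (0:ℝ) tc, |∫ t in (0:ℝ)..T, x1 t ^ 2 / s t| ≤ M * tc := by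
    intro T hT
    have hb : ∀ t ∈ Set.uIoc (0:ℝ) T, ‖x1 t ^ 2 / s t‖ ≤ M := by
      intro t ht
      rw [Set.uIoc_of_le hT.1] at ht
      have htm : t ∈ Set.Ico (0:ℝ) tc := ⟨ht.1.le, lt_of_le_of_lt ht.2 hT.2⟩
      have h1 : x1 t ^ 2 / s t ≤ x1 t ^ 2 :=
        div_le_self (sq_nonneg _) (hsge1 t htm)
      have h2 : 0 ≤ x1 t ^ 2 / s t := div_nonneg (sq_nonneg _) (hspos t htm).le
      rw [Real.norm_eq_abs, abs_of_nonneg h2]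
      exact le_trans h1 (hM t ⟨htm.1, htm.2.le⟩)
    have := intervalIntegral.norm_integral_le_of_norm_le_const hb
    rw [Real.norm_eq_abs] at this
    calc |∫ t in (0:ℝ)..T, x1 t ^ 2 / s t| ≤ M * |T - 0| := this
      _ ≤ M * tc := by
          rw [sub_zero, abs_of_nonneg hT.1]
          exact mul_le_mul_of_nonneg_left hT.2.le hM0
  -- rate of blow-up
  set φ : ℝ → ℝ := fun t => x1 t ^ 2 * ((s t)⁻¹) ^ 2 + (1 - x1 t ^ 2) with hφ_def
  have hinv0 : Tendsto (fun t => (s t)⁻¹) (nhdsWithin tc (Set.Iio tc)) (nhds 0) :=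
    tendsto_inv_atTop_zero.comp hblow
  have hx1tend : Tendsto (fun t => x1 t ^ 2) (nhdsWithin tc (Set.Iio tc))
      (nhds (x1 tc ^ 2)) :=
    (((hx1c.tendsto tc).mono_left nhdsWithin_le_nhds).pow 2)
  have hφtend : Tendsto φ (nhdsWithin tc (Set.Iio tc)) (nhds c) := by
    have h1 : Tendsto (fun t => x1 t ^ 2 * ((s t)⁻¹) ^ 2) (nhdsWithin tc (Set.Iio tc))
        (nhds (x1 tc ^ 2 * 0 ^ 2)) := hx1tend.mul (hinv0.pow 2)
    have h2 : Tendsto (fun t => 1 - x1 t ^ 2) (nhdsWithin tc (Set.Iio tc))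
        (nhds (1 - x1 tc ^ 2)) := tendsto_const_nhds.sub hx1tend
    have := h1.add h2
    simpa [hφ_def, hc_def, inv_pow] using this
  have hev : ∀ᶠ t in nhdsWithin tc (Set.Iio tc), φ t ∈ Set.Icc (c/2) (3*c/2) := by
    apply hφtend
    apply Icc_mem_nhds <;> linarith
  obtain ⟨a', ha'lt, ha'sub⟩ := mem_nhdsLT_iff_exists_Ioo_subset.1 hev
  set t1 : ℝ := max ((a' + tc)/2) 0 with ht1_def
  have ht1a' : a' < t1 := lt_max_of_lt_left (by linarith [ha'lt.out])
  have ht10 : 0 ≤ t1 := le_max_right _ _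
  have ht1tc : t1 < tc := max_lt (by linarith [ha'lt.out]) htc
  have hrate : ∀ a ∈ Set.Ico t1 tc, c/2*(tc-a) ≤ (s a)⁻¹ ∧ (s a)⁻¹ ≤ 3*c/2*(tc-a) := by
    intro a ha
    have hsub2 : Set.Ico a tc ⊆ Set.Ico 0 tc := fun t ht =>
      ⟨le_trans (le_trans ht10 ha.1) ht.1, ht.2⟩
    have hφb : ∀ t ∈ Set.Ico a tc, φ t ∈ Set.Icc (c/2) (3*c/2) := fun t ht =>
      ha'sub ⟨lt_of_lt_of_le (lt_of_lt_of_le ht1a' ha.1) ht.1, ht.2⟩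
    -- for each b in (a, tc), integral bounds
    have hkey : ∀ b ∈ Set.Ioo a tc,
        c/2*(b-a) + (s b)⁻¹ ≤ (s a)⁻¹ ∧ (s a)⁻¹ ≤ 3*c/2*(b-a) + (s b)⁻¹ := by
      intro b hb
      have hab : a ≤ b := hb.1.le
      have hIccsub : Set.Icc a b ⊆ Set.Ico 0 tc := fun t ht =>
        hsub2 ⟨ht.1, lt_of_le_of_lt ht.2 hb.2⟩
      have hIccsub' : Set.Icc a b ⊆ Set.Ico a tc := fun t ht =>
        ⟨ht.1, lt_of_le_of_lt ht.2 hb.2⟩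
      have hscont : ContinuousOn s (Set.Icc a b) := fun t ht =>
        ((hs t (hIccsub ht)).continuousAt).continuousWithinAt
      have hsne : ∀ t ∈ Set.Icc a b, s t ≠ 0 := fun t ht => (hspos t (hIccsub ht)).ne'
      have hφcont : ContinuousOn φ (Set.Icc a b) := by
        apply ContinuousOn.add
        · exact ((hx1c.pow 2).continuousOn).mul ((hscont.inv₀ hsne).pow 2)
        · exact (continuous_const.sub (hx1c.pow 2)).continuousOn
      have hφint : IntervalIntegrable φ MeasureTheory.volume a b :=
        (hφcont.mono (by rw [Set.uIcc_of_le hab])).intervalIntegrable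
      have hderiv : ∀ t ∈ Set.uIcc a b,
          HasDerivAt (fun t => (s t)⁻¹) (-(φ t)) t := by
        intro t ht
        rw [Set.uIcc_of_le hab] at ht
        have h0 := hsne t ht
        have hd := (hs t (hIccsub ht)).inv h0
        have : -(x1 t ^ 2 + (1 - x1 t ^ 2) * s t ^ 2) / s t ^ 2 = -(φ t) := by
          rw [hφ_def]
          field_simp
        rwa [this] at hd
      have heq := intervalIntegral.integral_eq_sub_of_hasDerivAt hderiv hφint.neg
      rw [intervalIntegral.integral_neg] at heq
      have heq2 : (s a)⁻¹ - (s b)⁻¹ = ∫ t in a..b, φ t := by linarith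
      have hlow : c/2*(b-a) ≤ ∫ t in a..b, φ t := by
        have := intervalIntegral.integral_mono_on hab
          (intervalIntegrable_const) hφint (fun t ht => (hφb t (hIccsub' ht)).1)
        simp only [intervalIntegral.integral_const, smul_eq_mul] at this
        linarith
      have hhigh : (∫ t in a..b, φ t) ≤ 3*c/2*(b-a) := by
        have := intervalIntegral.integral_mono_on hab
          hφint (intervalIntegrable_const) (fun t ht => (hφb t (hIccsub' ht)).2)
        simp only [intervalIntegral.integral_const, smul_eq_mul] at this
        linarith
      constructor <;> linarith
    have hIoo_mem : Set.Ioo a tc ∈ nhdsWithin tc (Set.Iio tc) :=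
      Ioo_mem_nhdsLT_of_mem ⟨ha.2, le_refl tc⟩
    have hnb : (nhdsWithin tc (Set.Iio tc)).NeBot := nhdsLT_neBot tc
    constructor
    · -- lower bound via limit
      have htend : Tendsto (fun b => c/2*(b-a) + (s b)⁻¹) (nhdsWithin tc (Set.Iio tc))
          (nhds (c/2*(tc-a) + 0)) := by
        exact (((tendsto_id.mono_left nhdsWithin_le_nhds).sub_const a).const_mul (c/2)).add hinv0
      have hevle : ∀ᶠ b in nhdsWithin tc (Set.Iio tc), c/2*(b-a) + (s b)⁻¹ ≤ (s a)⁻¹ :=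
        Filter.eventually_of_mem hIoo_mem fun b hb => (hkey b hb).1
      have := le_of_tendsto htend hevle
      linarith
    · have htend : Tendsto (fun b => 3*c/2*(b-a) + (s b)⁻¹) (nhdsWithin tc (Set.Iio tc))
          (nhds (3*c/2*(tc-a) + 0)) := by
        exact (((tendsto_id.mono_left nhdsWithin_le_nhds).sub_const a).const_mul (3*c/2)).add hinv0
      have hevle : ∀ᶠ b in nhdsWithin tc (Set.Iio tc), (s a)⁻¹ ≤ 3*c/2*(b-a) + (s b)⁻¹ :=
        Filter.eventually_of_mem hIoo_mem fun b hb => (hkey b hb).2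
      have := ge_of_tendsto htend hevle
      linarith
  -- assembly
  set K : ℝ := |Real.log (c/2)| + |Real.log (3*c/2)| + M * tc with hK_def
  have hK0 : 0 ≤ K := by positivity
  set δ : ℝ := min (tc - t1) 1 with hδ_def
  have hδ : 0 < δ := lt_min (by linarith) one_pos
  have hbound : ∀ ε ∈ Set.Ioo (0:ℝ) δ,
      |((1/2) * ∫ t in (0:ℝ)..(tc-ε), (1 - x1 t ^ 2) * s t) / Real.log (1/ε) - 1/2|
        ≤ K / (2 * (-Real.log ε)) := by
    intro ε hε
    have hε0 : 0 < ε := hε.1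
    have hε1 : ε < 1 := lt_of_lt_of_le hε.2 (min_le_right _ _)
    have hεt : ε < tc - t1 := lt_of_lt_of_le hε.2 (min_le_left _ _)
    set T := tc - ε with hT_def
    have hT1 : T ∈ Set.Ico t1 tc := ⟨by simp only [hT_def]; linarith, by simp only [hT_def]; linarith⟩
    have hT0 : T ∈ Set.Ico (0:ℝ) tc := ⟨le_trans ht10 hT1.1, hT1.2⟩
    have hlogε : Real.log ε < 0 := Real.log_neg hε0 hε1
    set L : ℝ := -Real.log ε with hL_def
    have hL : 0 < L := by simp only [hL_def]; linarith
    have hlog1ε : Real.log (1/ε) = L := by rw [one_div, Real.log_inv]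
    obtain ⟨hr1, hr2⟩ := hrate T hT1
    have htcT : tc - T = ε := by rw [hT_def]; ring
    rw [htcT] at hr1 hr2
    have hsT : 0 < s T := hspos T hT0
    have hinvpos : 0 < (s T)⁻¹ := inv_pos.2 hsT
    have hlog_le : Real.log ((s T)⁻¹) ≤ Real.log (3*c/2*ε) := Real.log_le_log hinvpos hr2
    have hlog_ge : Real.log (c/2*ε) ≤ Real.log ((s T)⁻¹) :=
      Real.log_le_log (by positivity) hr1
    have hlm1 : Real.log (c/2*ε) = Real.log (c/2) + Real.log ε :=
      Real.log_mul (by positivity) hε0.ne'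
    have hlm2 : Real.log (3*c/2*ε) = Real.log (3*c/2) + Real.log ε :=
      Real.log_mul (by positivity) hε0.ne'
    have hloginv : Real.log ((s T)⁻¹) = -Real.log (s T) := Real.log_inv _
    have hlsT : |Real.log (s T) - L| ≤ |Real.log (c/2)| + |Real.log (3*c/2)| := by
      rw [hloginv] at hlog_le hlog_ge
      rw [hlm1] at hlog_ge
      rw [hlm2] at hlog_le
      rw [abs_le]
      have h1 := le_abs_self (Real.log (3*c/2))
      have h2 := neg_le_abs (Real.log (c/2))
      have h3 := abs_nonneg (Real.log (c/2))
      have h4 := abs_nonneg (Real.log (3*c/2))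
      simp only [hL_def]
      constructor <;> linarith
    have hIval := hI T hT0
    have hJb := hJ T hT0
    have hIdiff : |(∫ t in (0:ℝ)..T, (1 - x1 t ^ 2) * s t) - L| ≤ K := by
      rw [hIval]
      have heq : Real.log (s T) - (∫ t in (0:ℝ)..T, x1 t ^ 2 / s t) - L
          = (Real.log (s T) - L) - (∫ t in (0:ℝ)..T, x1 t ^ 2 / s t) := by ring
      rw [heq]
      calc |(Real.log (s T) - L) - (∫ t in (0:ℝ)..T, x1 t ^ 2 / s t)|
          ≤ |Real.log (s T) - L| + |∫ t in (0:ℝ)..T, x1 t ^ 2 / s t| := abs_sub _ _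
        _ ≤ K := by rw [hK_def]; linarith
    rw [hlog1ε]
    have halg : ((1/2) * ∫ t in (0:ℝ)..T, (1 - x1 t ^ 2) * s t) / L - 1/2
        = ((∫ t in (0:ℝ)..T, (1 - x1 t ^ 2) * s t) - L) / (2*L) := by
      field_simp
    rw [halg, abs_div, abs_of_pos (by positivity : (0:ℝ) < 2*L)]
    exact (div_le_div_iff_of_pos_right (by positivity)).2 hIdiff
  have hLtend : Tendsto (fun ε : ℝ => -Real.log ε) (nhdsWithin 0 (Set.Ioi 0)) atTop :=
    tendsto_neg_atBot_atTop.comp Real.tendsto_log_nhdsGT_zero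
  have hbtend : Tendsto (fun ε : ℝ => K / (2 * (-Real.log ε)))
      (nhdsWithin 0 (Set.Ioi 0)) (nhds 0) := by
    have h2L : Tendsto (fun ε : ℝ => 2 * (-Real.log ε)) (nhdsWithin 0 (Set.Ioi 0)) atTop :=
      hLtend.const_mul_atTop two_pos
    have := h2L.inv_tendsto_atTop.const_mul K
    simpa [div_eq_mul_inv] using this
  have hfinal : Tendsto (fun ε : ℝ =>
      (((1/2) * ∫ t in (0:ℝ)..(tc-ε), (1 - x1 t ^ 2) * s t) / Real.log (1/ε)) - 1/2)
      (nhdsWithin 0 (Set.Ioi 0)) (nhds 0) := by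
    apply squeeze_zero_norm' _ hbtend
    filter_upwards [Ioo_mem_nhdsGT_of_mem (Set.mem_Ico.2 ⟨le_refl (0:ℝ), hδ⟩)] with ε hε
    rw [Real.norm_eq_abs]
    exact hbound ε hε
  have := hfinal.add (tendsto_const_nhds (x := (1/2 : ℝ)))
  simpa using this
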